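/- Let P be a slicing of a triangulated category D and let V be a nonzero object of D with a Harder–Narasimhan filtration with filtration objects 0 = F_{n+1}V, F_nV, …, F_1V, F_0V = V and semistable factors A_j ∈ P(φ_j) (φ_n > φ_{n−1} > ⋯ > φ_0). Fix 1 ≤ k ≤ n and let F_kV → V → V' →⁺ be any distinguished triangle whose first morphism is the composition of the filtration morphisms F_kV → F_{k−1}V → ⋯ → F_0V = V. Then F_kV admits a Harder–Narasimhan filtration with semistable factors A_n, A_{n−1}, …, A_k, and V' admits a Harder–Narasimhan filtration with semistable factors A_{k−1}, A_{k−2}, …, A_0. -/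

import Mathlib

open CategoryTheory CategoryTheory.Limits CategoryTheory.Pretriangulated

universe v u

variable (D : Type u) [Category.{v} D] [HasZeroObject D] [HasShift D ℤ] [Preadditive D]
  [∀ n : ℤ, (shiftFunctor D n).Additive] [Pretriangulated D]

/-- A slicing `P` of a triangulated category `D`: for every real number `φ`, a full additive
subcategory `P φ` (given by a predicate on objects), closed under isomorphisms, such that
(i) `P (φ + 1) = P φ ⟦1⟧` and (ii) `Hom(A₁, A₂) = 0` whenever `A₁ ∈ P φ₁`, `A₂ ∈ P φ₂` and
`φ₁ > φ₂`. -/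
structure Slicing where
  /-- the objects of the slice with phase `φ` -/
  P : ℝ → D → Prop
  mem_of_iso : ∀ {φ : ℝ} {X Y : D}, (X ≅ Y) → P φ X → P φ Y
  zero_mem : ∀ (φ : ℝ) (X : D), IsZero X → P φ X
  sum_mem : ∀ (φ : ℝ) (X Y : D), P φ X → P φ Y → P φ (X ⊞ Y)
  shift_mem : ∀ (φ : ℝ) (X : D), P φ X → P (φ + 1) (X⟦(1 : ℤ)⟧)
  shift_mem' : ∀ (φ : ℝ) (X : D), P (φ + 1) (X⟦(1 : ℤ)⟧) → P φ X
  hom_zero : ∀ {φ₁ φ₂ : ℝ}, φ₂ < φ₁ → ∀ {A₁ A₂ : D}, P φ₁ A₁ → P φ₂ A₂ →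
    ∀ f : A₁ ⟶ A₂, f = 0

variable {D}

/-- A Harder–Narasimhan filtration of a (necessarily nonzero) object `X` with respect to a
slicing `S`: a finite collection of distinguished triangles
`F (j+1) → F j → A j →⁺ (F (j+1))⟦1⟧` for `0 ≤ j ≤ n`, with `F 0 = X`, `F (n+1) = 0`, where
each `A j` is a nonzero object of `S.P (phase j)` and
`phase n > phase (n-1) > ⋯ > phase 0`.
(The semistable HN-factors are `A n, …, A 0`; `φ₊(X) = phase n` and `φ₋(X) = phase 0`.) -/
structure HNFiltration (S : Slicing D) (X : D) where
  /-- the number of steps: there are `n + 1` HN-factors `A 0, …, A n` -/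
  n : ℕ
  /-- the filtration objects -/
  F : ℕ → D
  /-- the semistable factors -/
  A : ℕ → D
  /-- the phases of the factors -/
  phase : ℕ → ℝ
  f : ∀ j : ℕ, F (j + 1) ⟶ F j
  g : ∀ j : ℕ, F j ⟶ A j
  h : ∀ j : ℕ, A j ⟶ (F (j + 1))⟦(1 : ℤ)⟧
  F_zero : F 0 = X
  isZero_top : IsZero (F (n + 1))
  mem : ∀ j ≤ n, S.P (phase j) (A j)
  nonzero : ∀ j ≤ n, ¬ IsZero (A j)
  dist : ∀ j ≤ n, (Triangle.mk (f j) (g j) (h j) ∈ distTriang D)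
  phase_lt : ∀ j : ℕ, j + 1 ≤ n → phase j < phase (j + 1)

/-- The composite `F k ⟶ F (k-1) ⟶ ⋯ ⟶ F 0` of the filtration morphisms of a
Harder–Narasimhan filtration. -/
def HNFiltration.toTop {S : Slicing D} {X : D} (H : HNFiltration S X) :
    ∀ k : ℕ, H.F k ⟶ H.F 0
  | 0 => 𝟙 _
  | k + 1 => H.f k ≫ H.toTop k

namespace HNAux

open CategoryTheory CategoryTheory.Limits CategoryTheory.Pretriangulated CategoryTheory.Preadditive

variable {D : Type u} [Category.{v} D] [HasZeroObject D] [HasShift D ℤ] [Preadditive D]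
  [∀ n : ℤ, (shiftFunctor D n).Additive] [Pretriangulated D]

lemma isZero_shift {X : D} (h : IsZero X) (n : ℤ) : IsZero (X⟦n⟧) := by
  rw [IsZero.iff_id_eq_zero] at h ⊢
  have hmap : (shiftFunctor D n).map (𝟙 X) = 𝟙 _ := CategoryTheory.Functor.map_id _ _
  rw [← hmap, h, Functor.map_zero]

variable {S : Slicing D} {V : D}

lemma phase_mono (H : HNFiltration S V) {i j : ℕ} (hij : i < j) (hj : j ≤ H.n) :
    H.phase i < H.phase j := by
  obtain ⟨d, rfl⟩ : ∃ d, j = i + 1 + d := ⟨j - (i+1), by omega⟩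
  clear hij
  induction d with
  | zero => exact H.phase_lt i (by omega)
  | succ d ih =>
      have h1 : i + 1 + d ≤ H.n := by omega
      have := H.phase_lt (i + 1 + d) (by omega)
      have h2 := ih h1
      calc H.phase i < H.phase (i+1+d) := h2
        _ < H.phase (i+1+d+1) := by
              have := H.phase_lt (i+1+d) (by omega)
              simpa using this
        _ = H.phase (i+1+(d+1)) := by ring_nf

/-- Dévissage: any map `(H.F l)⟦1⟧ ⟶ H.A j` vanishes when `j < l`. -/
lemma orth (H : HNFiltration S V) {j : ℕ} (hj : j ≤ H.n) :
    ∀ l, j < l → l ≤ H.n + 1 → ∀ g : (H.F l)⟦(1 : ℤ)⟧ ⟶ H.A j, g = 0 := by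
  have key : ∀ d l, H.n + 1 - l ≤ d → j < l → l ≤ H.n + 1 →
      ∀ g : (H.F l)⟦(1 : ℤ)⟧ ⟶ H.A j, g = 0 := by
    intro d
    induction d with
    | zero =>
        intro l hd hjl hl g
        have hl' : l = H.n + 1 := by omega
        subst hl'
        exact (isZero_shift H.isZero_top 1).eq_of_src g 0
    | succ d ih =>
        intro l hd hjl hl g
        by_cases hle : l ≤ H.n
        · -- use the triangle (F (l+1), F l, A l) rotated thrice
          have hT := rot_of_distTriang _ (rot_of_distTriang _ (rot_of_distTriang _
            (H.dist l hle)))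
          have h1 : (H.f l)⟦(1:ℤ)⟧' ≫ g = 0 := ih (l+1) (by omega) (by omega) (by omega) _
          obtain ⟨g', hg'⟩ := Triangle.yoneda_exact₂ _ hT g (by
            show (-(H.f l)⟦(1:ℤ)⟧') ≫ g = 0
            rw [Preadditive.neg_comp, h1, neg_zero])
          have hzero : g' = 0 := by
            refine S.hom_zero (φ₁ := H.phase l + 1) (φ₂ := H.phase j) ?_
              (S.shift_mem _ _ (H.mem l hle)) (H.mem j hj) g'
            have : H.phase j < H.phase l := phase_mono H hjl hle
            linarith
          rw [hg', hzero, comp_zero]; rfl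
        · have hl' : l = H.n + 1 := by omega
          subst hl'
          exact (isZero_shift H.isZero_top 1).eq_of_src g 0
  exact fun l => key (H.n + 1 - l) l le_rfl

end HNAux
namespace HNAux

variable {D : Type u} [Category.{v} D] [HasZeroObject D] [HasShift D ℤ] [Preadditive D]
  [∀ n : ℤ, (shiftFunctor D n).Additive] [Pretriangulated D]

variable {S : Slicing D} {V : D}

/-- The composite `F k ⟶ F j` of the filtration morphisms (for `j ≤ k`). -/
noncomputable def wcomp (H : HNFiltration S V) (k : ℕ) : ∀ j : ℕ, H.F k ⟶ H.F j :=
  fun j =>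
    if h : j < k then wcomp H k (j + 1) ≫ H.f j
    else if h' : k = j then eqToHom (congrArg H.F h') else 0
  termination_by j => k - j
  decreasing_by omega

lemma wcomp_succ (H : HNFiltration S V) {k j : ℕ} (h : j < k) :
    wcomp H k j = wcomp H k (j + 1) ≫ H.f j := by
  rw [wcomp]
  exact dif_pos h

lemma wcomp_self (H : HNFiltration S V) (k : ℕ) : wcomp H k k = 𝟙 _ := by
  rw [wcomp, dif_neg (lt_irrefl k), dif_pos rfl, eqToHom_refl]

lemma wcomp_toTop (H : HNFiltration S V) (k : ℕ) :
    ∀ j, j ≤ k → wcomp H k j ≫ H.toTop j = H.toTop k := by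
  have key : ∀ d j, k - j ≤ d → j ≤ k → wcomp H k j ≫ H.toTop j = H.toTop k := by
    intro d
    induction d with
    | zero =>
        intro j hd hj
        have : j = k := by omega
        subst this
        rw [wcomp_self, Category.id_comp]
    | succ d ih =>
        intro j hd hj
        by_cases h : j < k
        · rw [wcomp_succ H h, Category.assoc]
          have : H.f j ≫ H.toTop j = H.toTop (j + 1) := rfl
          rw [this]
          exact ih (j + 1) (by omega) (by omega)
        · have : j = k := by omega
          subst this
          rw [wcomp_self, Category.id_comp]
  exact fun j => key (k - j) j le_rfl

lemma wcomp_zero (H : HNFiltration S V) (k : ℕ) : wcomp H k 0 = H.toTop k := by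
  have := wcomp_toTop H k 0 (Nat.zero_le _)
  simpa [HNFiltration.toTop] using this

end HNAux
namespace HNAux

variable {D : Type u} [Category.{v} D] [HasZeroObject D] [HasShift D ℤ] [Preadditive D]
  [∀ n : ℤ, (shiftFunctor D n).Additive] [Pretriangulated D]

variable {S : Slicing D} {V : D}

/-- Output data of one step of the construction of the HN filtration of `V'`. -/
structure StepOut (H : HNFiltration S V) (k j : ℕ) (Vh : D) where
  U : D
  π' : H.F (j + 1) ⟶ U
  ρ' : U ⟶ (H.F k)⟦(1 : ℤ)⟧
  μ : U ⟶ Vh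
  q : Vh ⟶ H.A j
  ν : H.A j ⟶ U⟦(1 : ℤ)⟧
  hd : Triangle.mk (wcomp H k (j + 1)) π' ρ' ∈ distTriang D
  hc : Triangle.mk μ q ν ∈ distTriang D

set_option maxHeartbeats 1000000 in
lemma step_exists (H : HNFiltration S V) {k j : ℕ}
    (hjk : j < k) (hk : k ≤ H.n)
    {Vh : D} (πh : H.F j ⟶ Vh) (ρh : Vh ⟶ (H.F k)⟦(1 : ℤ)⟧)
    (hS : Triangle.mk (wcomp H k j) πh ρh ∈ distTriang D) :
    Nonempty (StepOut H k j Vh) := by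
  have hjn : j ≤ H.n := by omega
  have hafu : wcomp H k j = wcomp H k (j + 1) ≫ H.f j := wcomp_succ H hjk
  -- vanishing lemmas
  have Vxw : ∀ g : (H.F k)⟦(1 : ℤ)⟧ ⟶ H.A j, g = 0 := orth H hjn k hjk (by omega)
  have Vyw : ∀ g : (H.F (j + 1))⟦(1 : ℤ)⟧ ⟶ H.A j, g = 0 :=
    orth H hjn (j + 1) (by omega) (by omega)
  have hTG := H.dist j hjn
  -- Step 1 : the map q : Vh ⟶ H.A j
  obtain ⟨q, hq₁, hq₂⟩ := complete_distinguished_triangle_morphism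
    (Triangle.mk (wcomp H k j) πh ρh) (Triangle.mk (H.f j) (H.g j) (H.h j)) hS hTG
    (wcomp H k (j + 1)) (𝟙 _) (by
      show wcomp H k j ≫ 𝟙 _ = wcomp H k (j + 1) ≫ H.f j; rw [Category.comp_id, hafu])
  change Vh ⟶ H.A j at q
  change πh ≫ q = 𝟙 (H.F j) ≫ H.g j at hq₁
  change ρh ≫ (wcomp H k (j + 1))⟦(1 : ℤ)⟧' = q ≫ H.h j at hq₂
  rw [Category.id_comp] at hq₁
  -- Step 2 : the triangle TQ = (U, Vh, H.A j)
  obtain ⟨U, μ, ν, hTQ⟩ := distinguished_cocone_triangle₁ q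
  change U ⟶ Vh at μ
  change H.A j ⟶ U⟦(1 : ℤ)⟧ at ν
  -- Step 3 : the map π₁ : (F (j+1))⟦1⟧ ⟶ U⟦1⟧
  obtain ⟨π₁, hπa, hπb⟩ := complete_distinguished_triangle_morphism
    ((Triangle.mk (H.f j) (H.g j) (H.h j)).rotate) ((Triangle.mk μ q ν).rotate)
    (rot_of_distTriang _ hTG) (rot_of_distTriang _ hTQ)
    πh (𝟙 _) (by show H.g j ≫ 𝟙 _ = πh ≫ q; rw [Category.comp_id, hq₁])
  change (H.F (j + 1))⟦(1 : ℤ)⟧ ⟶ U⟦(1 : ℤ)⟧ at π₁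
  change H.h j ≫ π₁ = 𝟙 (H.A j) ≫ ν at hπa
  change (-(H.f j)⟦(1 : ℤ)⟧') ≫ πh⟦(1 : ℤ)⟧' = π₁ ≫ (-μ⟦(1 : ℤ)⟧') at hπb
  rw [Category.id_comp] at hπa
  rw [Preadditive.neg_comp, Preadditive.comp_neg, neg_inj] at hπb
  replace hπb := hπb.symm
  -- now hπb : π₁ ≫ μ⟦1⟧' = (H.f j)⟦1⟧' ≫ πh⟦1⟧'
  -- Step 4 : the cone of f' = wcomp H k (j+1)
  obtain ⟨N, πN, ρN, hTc⟩ := distinguished_cocone_triangle (wcomp H k (j + 1))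
  -- Step 5 : the comparison map σ : N ⟶ Vh
  obtain ⟨σ, hσ₁, hσ₂⟩ := complete_distinguished_triangle_morphism
    (Triangle.mk (wcomp H k (j + 1)) πN ρN) (Triangle.mk (wcomp H k j) πh ρh) hTc hS
    (𝟙 _) (H.f j) (by
      show wcomp H k (j + 1) ≫ H.f j = 𝟙 _ ≫ wcomp H k j; rw [Category.id_comp, hafu])
  change N ⟶ Vh at σ
  change πN ≫ σ = H.f j ≫ πh at hσ₁
  change ρN ≫ (𝟙 (H.F k))⟦(1 : ℤ)⟧' = σ ≫ ρh at hσ₂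
  rw [CategoryTheory.Functor.map_id, Category.comp_id] at hσ₂
  -- Step 6 : σ ≫ q = 0
  have hσq : σ ≫ q = 0 := by
    have h0 : πN ≫ (σ ≫ q) = 0 := by
      rw [← Category.assoc, hσ₁, Category.assoc, hq₁]
      exact comp_distTriang_mor_zero₁₂ _ hTG
    obtain ⟨g, hg⟩ := Triangle.yoneda_exact₂ ((Triangle.mk (wcomp H k (j + 1)) πN ρN).rotate)
      (rot_of_distTriang _ hTc) (σ ≫ q) h0
    change σ ≫ q = ρN ≫ g at hg
    rw [hg, Vxw g, comp_zero]
  -- Step 7 : the map θ : N ⟶ U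
  obtain ⟨θ, hθ⟩ := Triangle.coyoneda_exact₂ (Triangle.mk μ q ν) hTQ σ hσq
  change N ⟶ U at θ
  change σ = θ ≫ μ at hθ
  -- Step 8 : f'⟦1⟧' ≫ π₁ = 0
  have hf'π₁ : (wcomp H k (j + 1))⟦(1 : ℤ)⟧' ≫ π₁ = 0 := by
    have hcomp : ((wcomp H k (j + 1))⟦(1 : ℤ)⟧' ≫ π₁) ≫ μ⟦(1 : ℤ)⟧' = 0 := by
      have hz : wcomp H k j ≫ πh = 0 := comp_distTriang_mor_zero₁₂ _ hS
      rw [Category.assoc, hπb, ← Category.assoc, ← Functor.map_comp, ← hafu,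
        ← Functor.map_comp, hz, Functor.map_zero]
    obtain ⟨g, hg⟩ := Triangle.coyoneda_exact₁ (Triangle.mk μ q ν) hTQ _ hcomp
    change (H.F k)⟦(1 : ℤ)⟧ ⟶ H.A j at g
    change (wcomp H k (j + 1))⟦(1 : ℤ)⟧' ≫ π₁ = g ≫ ν at hg
    rw [hg, Vxw g, zero_comp]
  -- Step 9 : πN ≫ θ = π', where π' is the 1-fold "deshifting" of π₁
  have hθπ₁ : (πN ≫ θ)⟦(1 : ℤ)⟧' = π₁ := by
    have hΔ : ((πN ≫ θ)⟦(1 : ℤ)⟧' - π₁) ≫ μ⟦(1 : ℤ)⟧' = 0 := by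
      have e1 : (πN ≫ θ)⟦(1 : ℤ)⟧' ≫ μ⟦(1 : ℤ)⟧' = (H.f j ≫ πh)⟦(1 : ℤ)⟧' := by
        rw [← Functor.map_comp, Category.assoc, ← hθ, hσ₁]
      have e2 : π₁ ≫ μ⟦(1 : ℤ)⟧' = (H.f j ≫ πh)⟦(1 : ℤ)⟧' := by
        rw [hπb, Functor.map_comp]
      rw [Preadditive.sub_comp, e1, e2, sub_self]
    obtain ⟨g, hg⟩ := Triangle.coyoneda_exact₁ (Triangle.mk μ q ν) hTQ _ hΔ
    change (H.F (j + 1))⟦(1 : ℤ)⟧ ⟶ H.A j at g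
    change ((πN ≫ θ)⟦(1 : ℤ)⟧' - π₁) = g ≫ ν at hg
    rw [Vyw g, zero_comp] at hg
    rw [← sub_eq_zero]
    exact hg
  -- Step 10 : θ ≫ (μ ≫ ρh) = ρN
  have hθρ : θ ≫ (μ ≫ ρh) = ρN := by
    rw [← Category.assoc, ← hθ, hσ₂]
  have hπ₁' : πN⟦(1 : ℤ)⟧' ≫ θ⟦(1 : ℤ)⟧' = π₁ := by
    rw [← Functor.map_comp, hθπ₁]
  -- Step 11 : θ⟦1⟧ is an isomorphism, by a five-lemma style argument
  have hinj0 : ∀ {Q : D} (β : Q ⟶ N⟦(1 : ℤ)⟧), β ≫ θ⟦(1 : ℤ)⟧' = 0 → β = 0 := by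
    intro Q β hβ
    have hd1 : β ≫ ρN⟦(1 : ℤ)⟧' = 0 := by
      rw [← hθρ, Functor.map_comp, Functor.map_comp, ← Category.assoc, ← Category.assoc,
        hβ, zero_comp, zero_comp]
    obtain ⟨y₃m, hy₃⟩ := Triangle.coyoneda_exact₁
      ((Triangle.mk (wcomp H k (j + 1)) πN ρN).rotate.rotate)
      (rot_of_distTriang _ (rot_of_distTriang _ hTc)) β hd1
    change Q ⟶ (H.F (j + 1))⟦(1 : ℤ)⟧ at y₃m
    change β = y₃m ≫ (-(πN⟦(1 : ℤ)⟧')) at hy₃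
    rw [Preadditive.comp_neg, ← Preadditive.neg_comp] at hy₃
    set y₃ : Q ⟶ (H.F (j + 1))⟦(1 : ℤ)⟧ := -y₃m with hy₃def
    -- hy₃ : β = y₃ ≫ πN⟦1⟧'
    have h3 : y₃ ≫ π₁ = 0 := by
      rw [← hπ₁', ← Category.assoc, ← hy₃, hβ]
    have h4 : (y₃ ≫ (H.f j)⟦(1 : ℤ)⟧') ≫ πh⟦(1 : ℤ)⟧' = 0 := by
      rw [Category.assoc, ← hπb, ← Category.assoc, h3, zero_comp]
    obtain ⟨γm, hγ⟩ := Triangle.coyoneda_exact₁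
      ((Triangle.mk (wcomp H k j) πh ρh).rotate) (rot_of_distTriang _ hS) _ h4
    change Q ⟶ (H.F k)⟦(1 : ℤ)⟧ at γm
    change y₃ ≫ (H.f j)⟦(1 : ℤ)⟧' = γm ≫ (-((wcomp H k j)⟦(1 : ℤ)⟧')) at hγ
    rw [Preadditive.comp_neg, ← Preadditive.neg_comp] at hγ
    set γ : Q ⟶ (H.F k)⟦(1 : ℤ)⟧ := -γm with hγdef
    -- hγ : y₃ ≫ (H.f j)⟦1⟧' = γ ≫ (wcomp H k j)⟦1⟧'
    have h5 : (y₃ - γ ≫ (wcomp H k (j + 1))⟦(1 : ℤ)⟧') ≫ (H.f j)⟦(1 : ℤ)⟧' = 0 := by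
      rw [Preadditive.sub_comp, hγ, Category.assoc, ← Functor.map_comp, ← hafu, sub_self]
    obtain ⟨ε, hε⟩ := Triangle.coyoneda_exact₁
      (Triangle.mk (H.f j) (H.g j) (H.h j)) hTG _ h5
    change Q ⟶ H.A j at ε
    change (y₃ - γ ≫ (wcomp H k (j + 1))⟦(1 : ℤ)⟧') = ε ≫ H.h j at hε
    have h6 : (y₃ - γ ≫ (wcomp H k (j + 1))⟦(1 : ℤ)⟧') ≫ π₁ = 0 := by
      rw [Preadditive.sub_comp, h3, Category.assoc, hf'π₁, comp_zero, zero_sub, neg_eq_zero]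
    have h7 : ε ≫ ν = 0 := by
      rw [← hπa, ← Category.assoc, ← hε]
      exact h6
    obtain ⟨ε', hε'⟩ := Triangle.coyoneda_exact₃ (Triangle.mk μ q ν) hTQ ε h7
    change Q ⟶ Vh at ε'
    change ε = ε' ≫ q at hε'
    have hzc : (wcomp H k (j + 1)) ≫ πN = 0 := comp_distTriang_mor_zero₁₂ _ hTc
    have hδπN : (y₃ - γ ≫ (wcomp H k (j + 1))⟦(1 : ℤ)⟧') ≫ πN⟦(1 : ℤ)⟧' = y₃ ≫ πN⟦(1 : ℤ)⟧' := by
      rw [Preadditive.sub_comp, Category.assoc, ← Functor.map_comp, hzc, Functor.map_zero,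
        comp_zero, sub_zero]
    have hqh : q ≫ H.h j ≫ πN⟦(1 : ℤ)⟧' = 0 := by
      rw [← Category.assoc, ← hq₂, Category.assoc, ← Functor.map_comp, hzc,
        Functor.map_zero, comp_zero]
    rw [hy₃, ← hδπN, hε, hε', Category.assoc, Category.assoc, hqh, comp_zero]
  have hsurj0 : ∀ {Q : D} (α : Q ⟶ U⟦(1 : ℤ)⟧), ∃ β : Q ⟶ N⟦(1 : ℤ)⟧,
      β ≫ θ⟦(1 : ℤ)⟧' = α := by
    intro Q α
    have hμq : μ ≫ q = 0 := comp_distTriang_mor_zero₁₂ _ hTQ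
    have hzz : (μ ≫ ρh) ≫ (wcomp H k (j + 1))⟦(1 : ℤ)⟧' = 0 := by
      rw [Category.assoc, hq₂, ← Category.assoc, hμq, zero_comp]
    have hα2 : (α ≫ (μ ≫ ρh)⟦(1 : ℤ)⟧') ≫ ((wcomp H k (j + 1))⟦(1 : ℤ)⟧')⟦(1 : ℤ)⟧' = 0 := by
      rw [Category.assoc, ← Functor.map_comp, hzz, Functor.map_zero, comp_zero]
    obtain ⟨btm, hbt⟩ := Triangle.coyoneda_exact₁
      ((Triangle.mk (wcomp H k (j + 1)) πN ρN).rotate.rotate.rotate)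
      (rot_of_distTriang _ (rot_of_distTriang _ (rot_of_distTriang _ hTc)))
      (α ≫ (μ ≫ ρh)⟦(1 : ℤ)⟧') (by
        show (α ≫ (μ ≫ ρh)⟦(1 : ℤ)⟧') ≫ (-((wcomp H k (j + 1))⟦(1 : ℤ)⟧'))⟦(1 : ℤ)⟧' = 0
        rw [Functor.map_neg, Preadditive.comp_neg, hα2, neg_zero])
    change Q ⟶ N⟦(1 : ℤ)⟧ at btm
    change α ≫ (μ ≫ ρh)⟦(1 : ℤ)⟧' = btm ≫ (-(ρN⟦(1 : ℤ)⟧')) at hbt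
    rw [Preadditive.comp_neg, ← Preadditive.neg_comp] at hbt
    set bt : Q ⟶ N⟦(1 : ℤ)⟧ := -btm with hbtdef
    -- hbt : α ≫ (μ ≫ ρh)⟦1⟧' = bt ≫ ρN⟦1⟧'
    have hα' : (α - bt ≫ θ⟦(1 : ℤ)⟧') ≫ (μ ≫ ρh)⟦(1 : ℤ)⟧' = 0 := by
      rw [Preadditive.sub_comp, hbt, Category.assoc, ← Functor.map_comp, hθρ, sub_self]
    have hα'2 : ((α - bt ≫ θ⟦(1 : ℤ)⟧') ≫ μ⟦(1 : ℤ)⟧') ≫ ρh⟦(1 : ℤ)⟧' = 0 := by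
      rw [Category.assoc, ← Functor.map_comp]
      exact hα'
    obtain ⟨z'm, hz'⟩ := Triangle.coyoneda_exact₁
      ((Triangle.mk (wcomp H k j) πh ρh).rotate.rotate)
      (rot_of_distTriang _ (rot_of_distTriang _ hS)) _ hα'2
    change Q ⟶ (H.F j)⟦(1 : ℤ)⟧ at z'm
    change (α - bt ≫ θ⟦(1 : ℤ)⟧') ≫ μ⟦(1 : ℤ)⟧' = z'm ≫ (-(πh⟦(1 : ℤ)⟧')) at hz'
    rw [Preadditive.comp_neg, ← Preadditive.neg_comp] at hz'
    set z' : Q ⟶ (H.F j)⟦(1 : ℤ)⟧ := -z'm with hz'def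
    -- hz' : (α - bt ≫ θ⟦1⟧') ≫ μ⟦1⟧' = z' ≫ πh⟦1⟧'
    have h5b : z' ≫ (H.g j)⟦(1 : ℤ)⟧' = 0 := by
      rw [← hq₁, Functor.map_comp, ← Category.assoc, ← hz', Category.assoc,
        ← Functor.map_comp, hμq, Functor.map_zero, comp_zero]
    obtain ⟨y₁m, hy₁⟩ := Triangle.coyoneda_exact₁
      ((Triangle.mk (H.f j) (H.g j) (H.h j)).rotate) (rot_of_distTriang _ hTG) z' h5b
    change Q ⟶ (H.F (j + 1))⟦(1 : ℤ)⟧ at y₁m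
    change z' = y₁m ≫ (-((H.f j)⟦(1 : ℤ)⟧')) at hy₁
    rw [Preadditive.comp_neg, ← Preadditive.neg_comp] at hy₁
    set y₁ : Q ⟶ (H.F (j + 1))⟦(1 : ℤ)⟧ := -y₁m with hy₁def
    -- hy₁ : z' = y₁ ≫ (H.f j)⟦1⟧'
    have hc5d : (α - bt ≫ θ⟦(1 : ℤ)⟧' - y₁ ≫ π₁) ≫ μ⟦(1 : ℤ)⟧' = 0 := by
      rw [Preadditive.sub_comp, hz', Category.assoc, hπb, ← Category.assoc, ← hy₁, sub_self]
    obtain ⟨ω, hω⟩ := Triangle.coyoneda_exact₁ (Triangle.mk μ q ν) hTQ _ hc5d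
    change Q ⟶ H.A j at ω
    change α - bt ≫ θ⟦(1 : ℤ)⟧' - y₁ ≫ π₁ = ω ≫ ν at hω
    refine ⟨bt + (y₁ + ω ≫ H.h j) ≫ πN⟦(1 : ℤ)⟧', ?_⟩
    rw [Preadditive.add_comp, Category.assoc, hπ₁', Preadditive.add_comp, Category.assoc, hπa]
    rw [← hω]
    abel
  have hbij : ∀ (Q : D), Function.Bijective
      (fun (x : Q ⟶ N⟦(1 : ℤ)⟧) => x ≫ θ⟦(1 : ℤ)⟧') := by
    intro Q
    constructor
    · intro a b hab
      dsimp at hab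
      have : (a - b) ≫ θ⟦(1 : ℤ)⟧' = 0 := by
        rw [Preadditive.sub_comp, hab, sub_self]
      have := hinj0 _ this
      rwa [sub_eq_zero] at this
    · intro α
      obtain ⟨β, hβ⟩ := hsurj0 α
      exact ⟨β, hβ⟩
  have hiso1 : IsIso (θ⟦(1 : ℤ)⟧') := isIso_of_yoneda_map_bijective _ hbij
  have hiso : IsIso θ := isIso_of_reflects_iso θ (shiftFunctor D (1 : ℤ))
  -- Step 12 : conclusion
  have hcand : Triangle.mk (wcomp H k (j + 1)) (πN ≫ θ) (μ ≫ ρh) ∈ distTriang D := by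
    refine isomorphic_distinguished _ hTc _ ?_
    refine (Triangle.isoMk (Triangle.mk (wcomp H k (j + 1)) πN ρN)
      (Triangle.mk (wcomp H k (j + 1)) (πN ≫ θ) (μ ≫ ρh))
      (Iso.refl _) (Iso.refl _) (@asIso _ _ _ _ θ hiso) ?_ ?_ ?_).symm
    · unfold Triangle.mk; dsimp; rw [Category.comp_id, Category.id_comp]
    · unfold Triangle.mk; dsimp; rw [Category.id_comp]
    · unfold Triangle.mk; dsimp
      rw [hθρ, CategoryTheory.Functor.map_id, Category.comp_id]
  exact ⟨⟨U, πN ≫ θ, μ ≫ ρh, μ, q, ν, hcand, hTQ⟩⟩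

end HNAux
namespace HNAux

variable {D : Type u} [Category.{v} D] [HasZeroObject D] [HasShift D ℤ] [Preadditive D]
  [∀ n : ℤ, (shiftFunctor D n).Additive] [Pretriangulated D]

variable {S : Slicing D} {V : D}

/-- A node of the tower construction. -/
structure Node (H : HNFiltration S V) (k : ℕ) (j : ℕ) where
  G : D
  π : H.F j ⟶ G
  ρ : G ⟶ (H.F k)⟦(1 : ℤ)⟧
  prevG : D
  μ : G ⟶ prevG
  q : prevG ⟶ H.A (j - 1)
  ν : H.A (j - 1) ⟶ G⟦(1 : ℤ)⟧
  hS : j ≤ k → Triangle.mk (wcomp H k j) π ρ ∈ distTriang D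
  hconn : 1 ≤ j → j ≤ k → Triangle.mk μ q ν ∈ distTriang D

/-- One step of the tower. -/
noncomputable def towerStep (H : HNFiltration S V) (k : ℕ) (hk : k ≤ H.n) (j : ℕ)
    (N : Node H k j) : Node H k (j + 1) :=
  if h : j + 1 ≤ k then
    let E := Classical.choice (step_exists H (by omega) hk N.π N.ρ (N.hS (by omega)))
    { G := E.U
      π := E.π'
      ρ := E.ρ'
      prevG := N.G
      μ := E.μ
      q := E.q
      ν := E.ν
      hS := fun _ => E.hd
      hconn := fun _ _ => E.hc }
  else
    { G := H.F (j + 1)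
      π := 𝟙 _
      ρ := 0
      prevG := N.G
      μ := 0
      q := 0
      ν := 0
      hS := fun hle => absurd hle h
      hconn := fun _ hle => absurd hle h }

/-- The base triangle, rewritten so that its second object is `H.F 0`. -/
lemma base_dist (H : HNFiltration S V) (k : ℕ) {V' : D}
    (v : V ⟶ V') (w : V' ⟶ (H.F k)⟦(1 : ℤ)⟧)
    (hT : Triangle.mk (H.toTop k ≫ eqToHom H.F_zero) v w ∈ distTriang D) :
    Triangle.mk (wcomp H k 0) (eqToHom H.F_zero ≫ v) w ∈ distTriang D := by
  refine isomorphic_distinguished _ hT _ ?_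
  refine Triangle.isoMk _ _ (Iso.refl _) (eqToIso H.F_zero) (Iso.refl _) ?_ ?_ ?_
  · unfold Triangle.mk; dsimp
    rw [wcomp_zero, Category.id_comp]
  · unfold Triangle.mk; dsimp
    rw [Category.comp_id]
  · unfold Triangle.mk; dsimp
    rw [Category.id_comp, CategoryTheory.Functor.map_id, Category.comp_id]

/-- The tower of nodes. -/
noncomputable def tower (H : HNFiltration S V) (k : ℕ) (hk : k ≤ H.n) {V' : D}
    (v : V ⟶ V') (w : V' ⟶ (H.F k)⟦(1 : ℤ)⟧)
    (hT : Triangle.mk (H.toTop k ≫ eqToHom H.F_zero) v w ∈ distTriang D) :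
    ∀ j : ℕ, Node H k j
  | 0 =>
    { G := V'
      π := eqToHom H.F_zero ≫ v
      ρ := w
      prevG := V'
      μ := 𝟙 _
      q := 0
      ν := 0
      hS := fun _ => base_dist H k v w hT
      hconn := fun h1 => absurd h1 (by omega) }
  | (j + 1) => towerStep H k hk j (tower H k hk v w hT j)

variable (H : HNFiltration S V) (k : ℕ) (hk : k ≤ H.n) {V' : D}
  (v : V ⟶ V') (w : V' ⟶ (H.F k)⟦(1 : ℤ)⟧)
  (hT : Triangle.mk (H.toTop k ≫ eqToHom H.F_zero) v w ∈ distTriang D)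

lemma tower_prevG (j : ℕ) : (tower H k hk v w hT (j + 1)).prevG = (tower H k hk v w hT j).G := by
  show (towerStep H k hk j (tower H k hk v w hT j)).prevG = _
  unfold towerStep
  split <;> rfl

lemma tower_zero_G : (tower H k hk v w hT 0).G = V' := rfl

/-- The top of the tower is zero. -/
lemma tower_top_isZero (hk₁ : 1 ≤ k) : IsZero (tower H k hk v w hT k).G := by
  have hSdist := (tower H k hk v w hT k).hS le_rfl
  have hcontr := contractible_distinguished (H.F k)
  obtain ⟨c, hc₁, hc₂⟩ := complete_distinguished_triangle_morphism
    (contractibleTriangle (H.F k)) _ hcontr hSdist (𝟙 _) (wcomp H k k)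
    (by rfl)
  let φ : contractibleTriangle (H.F k) ⟶
      Triangle.mk (wcomp H k k) (tower H k hk v w hT k).π (tower H k hk v w hT k).ρ :=
    { hom₁ := 𝟙 _
      hom₂ := wcomp H k k
      hom₃ := c
      comm₁ := by rfl
      comm₂ := hc₁
      comm₃ := hc₂ }
  have : IsIso φ.hom₂ := by
    dsimp [φ]
    rw [wcomp_self]
    exact IsIso.id _
  have : IsIso φ.hom₃ := isIso₃_of_isIso₁₂ φ hcontr hSdist (by exact IsIso.id _) this
  have e : (contractibleTriangle (H.F k)).obj₃ ≅ (tower H k hk v w hT k).G := @asIso _ _ _ _ φ.hom₃ this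
  exact (isZero_zero D).of_iso e.symm

end HNAux

/-!
STATEMENT 3:
Let `V` be a nonzero object with Harder–Narasimhan filtration with filtration objects
`0 = F (n+1), F n, …, F 0 = V` and factors `A j ∈ P (phase j)`. Fix `1 ≤ k ≤ n` and let
`F k → V → V' →⁺` be a distinguished triangle whose first morphism is the composition of the
filtration morphisms. Then `F k` has a HNF with factors `A n, …, A k` and `V'` has one
with factors `A (k-1), …, A 0` (with the same phases).
-/

theorem statement3
    {D : Type u} [Category.{v} D] [HasZeroObject D] [HasShift D ℤ] [Preadditive D]
    [∀ n : ℤ, (shiftFunctor D n).Additive] [Pretriangulated D]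
    (S : Slicing D) {V : D} (hV : ¬ IsZero V) (H : HNFiltration S V)
    (k : ℕ) (hk₁ : 1 ≤ k) (hk₂ : k ≤ H.n)
    {V' : D} (v : V ⟶ V') (w : V' ⟶ (H.F k)⟦(1 : ℤ)⟧)
    (hT : Triangle.mk (H.toTop k ≫ eqToHom H.F_zero) v w ∈ distTriang D) :
    (∃ H₁ : HNFiltration S (H.F k), H₁.n + k = H.n ∧
      ∀ j ≤ H₁.n, H₁.phase j = H.phase (j + k) ∧ Nonempty (H₁.A j ≅ H.A (j + k))) ∧
    (∃ H₂ : HNFiltration S V', H₂.n + 1 = k ∧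
      ∀ j ≤ H₂.n, H₂.phase j = H.phase j ∧ Nonempty (H₂.A j ≅ H.A j)) := by
  constructor
  · -- Part 1 : the filtration of F k, by reindexing
    refine ⟨{
      n := H.n - k
      F := fun j => H.F (j + k)
      A := fun j => H.A (j + k)
      phase := fun j => H.phase (j + k)
      f := fun j => eqToHom (congrArg H.F (by omega : j + 1 + k = j + k + 1)) ≫ H.f (j + k)
      g := fun j => H.g (j + k)
      h := fun j => H.h (j + k) ≫
        eqToHom (congrArg (fun m => (H.F m)⟦(1 : ℤ)⟧) (by omega : j + k + 1 = j + 1 + k))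
      F_zero := congrArg H.F (by omega)
      isZero_top := by
        show IsZero (H.F (H.n - k + 1 + k))
        rw [show H.n - k + 1 + k = H.n + 1 by omega]
        exact H.isZero_top
      mem := fun j hj => H.mem (j + k) (by have hj' : j ≤ H.n - k := hj; omega)
      nonzero := fun j hj => H.nonzero (j + k) (by have hj' : j ≤ H.n - k := hj; omega)
      dist := fun j hj => by
        have hj' : j ≤ H.n - k := hj
        refine isomorphic_distinguished _ (H.dist (j + k) (by omega)) _ ?_
        refine Triangle.isoMk _ _
          (eqToIso (congrArg H.F (by omega : j + 1 + k = j + k + 1))) (Iso.refl _)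
          (Iso.refl _) ?_ ?_ ?_
        · unfold Triangle.mk; dsimp
          rw [Category.comp_id]
        · unfold Triangle.mk; dsimp
          rw [Category.comp_id, Category.id_comp]
        · unfold Triangle.mk; dsimp
          rw [Category.id_comp, Category.assoc, eqToHom_map, eqToHom_trans, eqToHom_refl,
            Category.comp_id]
      phase_lt := fun j hj => by
        have hj' : j + 1 ≤ H.n - k := hj
        show H.phase (j + k) < H.phase (j + 1 + k)
        rw [show j + 1 + k = j + k + 1 by omega]
        exact H.phase_lt (j + k) (by omega)
    }, by show H.n - k + k = H.n; omega, fun j hj => ⟨rfl, ⟨Iso.refl _⟩⟩⟩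
  · -- Part 2 : the filtration of V', via the tower construction
    refine ⟨{
      n := k - 1
      F := fun j => (HNAux.tower H k hk₂ v w hT j).G
      A := H.A
      phase := H.phase
      f := fun j => (HNAux.tower H k hk₂ v w hT (j + 1)).μ ≫
        eqToHom (HNAux.tower_prevG H k hk₂ v w hT j)
      g := fun j => eqToHom (HNAux.tower_prevG H k hk₂ v w hT j).symm ≫
        (HNAux.tower H k hk₂ v w hT (j + 1)).q
      h := fun j => (HNAux.tower H k hk₂ v w hT (j + 1)).ν
      F_zero := rfl
      isZero_top := by
        show IsZero (HNAux.tower H k hk₂ v w hT (k - 1 + 1)).G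
        rw [show k - 1 + 1 = k by omega]
        exact HNAux.tower_top_isZero H k hk₂ v w hT hk₁
      mem := fun j hj => H.mem j (by have hj' : j ≤ k - 1 := hj; omega)
      nonzero := fun j hj => H.nonzero j (by have hj' : j ≤ k - 1 := hj; omega)
      dist := fun j hj => by
        have hj' : j ≤ k - 1 := hj
        have hconn := (HNAux.tower H k hk₂ v w hT (j + 1)).hconn (by omega) (by omega)
        refine isomorphic_distinguished _ hconn _ ?_
        refine Triangle.isoMk _ _ (Iso.refl _)
          (eqToIso (HNAux.tower_prevG H k hk₂ v w hT j).symm) (Iso.refl _) ?_ ?_ ?_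
        · unfold Triangle.mk; dsimp
          rw [Category.id_comp, Category.assoc, eqToHom_trans, eqToHom_refl, Category.comp_id]
        · unfold Triangle.mk; dsimp
          rw [Category.comp_id]
        · unfold Triangle.mk; dsimp
          rw [Category.id_comp, CategoryTheory.Functor.map_id, Category.comp_id]
      phase_lt := fun j hj => H.phase_lt j (by have hj' : j + 1 ≤ k - 1 := hj; omega)
    }, by show k - 1 + 1 = k; omega, fun j hj => ⟨rfl, ⟨Iso.refl _⟩⟩⟩
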